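/- Let Y, Ỹ ∈ ℝ^{n×k} have orthonormal columns, and set E = YYᵀ − ỸỸᵀ with ‖E‖_F ≤ ε for some ε ≥ 0. Let X̃, X_opt ∈ ℝ^{n×k} have orthonormal columns, let γ ≥ 1, and suppose ‖Ỹ − X̃X̃ᵀỸ‖_F² ≤ γ · ‖Ỹ − X_opt X_optᵀ Ỹ‖_F². Then ‖Y − X̃X̃ᵀY‖_F ≤ √γ · ‖Y − X_opt X_optᵀ Y‖_F + 2√γ · ε. -/
import Mathlib


open Matrix

/-- Squared Frobenius norm of a real matrix: `‖A‖_F² = Σ_{i,j} A_{ij}²`. -/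
noncomputable def frobSq {m n : ℕ} (A : Matrix (Fin m) (Fin n) ℝ) : ℝ :=
  ∑ i, ∑ j, (A i j) ^ 2

/-- Frobenius norm of a real matrix. -/
noncomputable def frobNorm {m n : ℕ} (A : Matrix (Fin m) (Fin n) ℝ) : ℝ :=
  Real.sqrt (frobSq A)

attribute [local instance] Matrix.frobeniusNormedAddCommGroup

lemma frobNorm_eq_norm {m n : ℕ} (A : Matrix (Fin m) (Fin n) ℝ) : frobNorm A = ‖A‖ := by
  rw [Matrix.frobenius_norm_def, frobNorm, frobSq, Real.sqrt_eq_rpow]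
  congr 1
  refine Finset.sum_congr rfl fun i _ => Finset.sum_congr rfl fun j _ => ?_
  rw [Real.norm_eq_abs, Real.rpow_two, sq_abs]

lemma frobSq_nonneg {m n : ℕ} (A : Matrix (Fin m) (Fin n) ℝ) : 0 ≤ frobSq A :=
  Finset.sum_nonneg fun _ _ => Finset.sum_nonneg fun _ _ => sq_nonneg _

lemma frobSq_eq_trace {m n : ℕ} (A : Matrix (Fin m) (Fin n) ℝ) :
    frobSq A = Matrix.trace (Aᵀ * A) := by
  rw [frobSq, Finset.sum_comm]
  simp [Matrix.trace, Matrix.mul_apply, Matrix.diag, sq]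

lemma frobNorm_nonneg {m n : ℕ} (A : Matrix (Fin m) (Fin n) ℝ) : 0 ≤ frobNorm A :=
  Real.sqrt_nonneg _

/-- Frobenius norm is invariant under right multiplication by `Yᵀ` with `YᵀY = 1`:
`frobSq (A * Y * Yᵀ) = frobSq (A * Y)`. -/
lemma frobSq_mul_orth {m n k : ℕ} (A : Matrix (Fin m) (Fin n) ℝ)
    (Y : Matrix (Fin n) (Fin k) ℝ) (hY : Yᵀ * Y = 1) :
    frobSq (A * (Y * Yᵀ)) = frobSq (A * Y) := by
  rw [frobSq_eq_trace, frobSq_eq_trace]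
  have h1 : (A * (Y * Yᵀ))ᵀ * (A * (Y * Yᵀ)) =
      Y * ((Yᵀ * Aᵀ * A * Y) * Yᵀ) := by
    simp only [Matrix.transpose_mul, Matrix.transpose_transpose, Matrix.mul_assoc]
  rw [h1, Matrix.trace_mul_comm]
  have h2 : (Yᵀ * Aᵀ * A * Y) * Yᵀ * Y = (A * Y)ᵀ * (A * Y) := by
    rw [Matrix.mul_assoc _ Yᵀ Y, hY, Matrix.mul_one]
    simp only [Matrix.transpose_mul, Matrix.mul_assoc]
  rw [h2]

/-- Projection contraction: if `XᵀX = 1` then `frobSq ((1 - XXᵀ)A) ≤ frobSq A`. -/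
lemma frobSq_proj_le {n k m : ℕ} (X : Matrix (Fin n) (Fin k) ℝ) (hX : Xᵀ * X = 1)
    (A : Matrix (Fin n) (Fin m) ℝ) :
    frobSq ((1 - X * Xᵀ) * A) ≤ frobSq A := by
  have hP : (X * Xᵀ) * (X * Xᵀ) = X * Xᵀ := by
    rw [Matrix.mul_assoc, ← Matrix.mul_assoc Xᵀ X Xᵀ, hX, Matrix.one_mul]
  have key : ((1 - X * Xᵀ) * A)ᵀ * ((1 - X * Xᵀ) * A) =
      Aᵀ * A - (Xᵀ * A)ᵀ * (Xᵀ * A) := by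
    have hT : (1 - X * Xᵀ)ᵀ = 1 - X * Xᵀ := by
      simp [Matrix.transpose_sub, Matrix.transpose_mul]
    rw [Matrix.transpose_mul, hT, Matrix.mul_assoc, ← Matrix.mul_assoc (1 - X * Xᵀ)]
    have : (1 - X * Xᵀ) * (1 - X * Xᵀ) = 1 - X * Xᵀ := by
      rw [Matrix.mul_sub, Matrix.sub_mul, Matrix.sub_mul, hP, Matrix.one_mul,
        Matrix.mul_one, Matrix.one_mul]
      abel
    rw [this, Matrix.sub_mul, Matrix.one_mul, Matrix.mul_sub]
    congr 1
    simp only [Matrix.transpose_mul, Matrix.transpose_transpose, Matrix.mul_assoc]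
  have := frobSq_nonneg (Xᵀ * A)
  rw [frobSq_eq_trace, key, Matrix.trace_sub, ← frobSq_eq_trace, ← frobSq_eq_trace]
  linarith

lemma frobNorm_le_of_frobSq {m n p q : ℕ} {A : Matrix (Fin m) (Fin n) ℝ}
    {B : Matrix (Fin p) (Fin q) ℝ} (h : frobSq A ≤ frobSq B) : frobNorm A ≤ frobNorm B :=
  Real.sqrt_le_sqrt h

/-- If `Y, Ỹ` have orthonormal columns with `‖YYᵀ − ỸỸᵀ‖_F ≤ ε`, and the
indicator matrix `X̃` is a `γ`-approximate `k`-means solution on `Ỹ`, then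
`‖Y − X̃X̃ᵀY‖_F ≤ √γ·‖Y − X_opt X_optᵀ Y‖_F + 2√γ·ε`. -/
theorem approx_clustering_frobNorm_bound (n k : ℕ)
    (Y Yt Xt Xopt : Matrix (Fin n) (Fin k) ℝ)
    (hY : Yᵀ * Y = 1) (hYt : Ytᵀ * Yt = 1)
    (hXt : Xtᵀ * Xt = 1) (hXopt : Xoptᵀ * Xopt = 1)
    (ε : ℝ) (hε : 0 ≤ ε)
    (hE : frobNorm (Y * Yᵀ - Yt * Ytᵀ) ≤ ε)
    (γ : ℝ) (hγ : 1 ≤ γ)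
    (happrox : frobSq (Yt - Xt * Xtᵀ * Yt) ≤ γ * frobSq (Yt - Xopt * Xoptᵀ * Yt)) :
    frobNorm (Y - Xt * Xtᵀ * Y) ≤
      Real.sqrt γ * frobNorm (Y - Xopt * Xoptᵀ * Y) + 2 * Real.sqrt γ * ε := by
  set E : Matrix (Fin n) (Fin n) ℝ := Y * Yᵀ - Yt * Ytᵀ with hEdef
  have hsγ : 1 ≤ Real.sqrt γ := by
    rw [show (1:ℝ) = Real.sqrt 1 by simp]
    exact Real.sqrt_le_sqrt hγ
  -- rewrite differences as projections
  have rw1 : ∀ (X Z : Matrix (Fin n) (Fin k) ℝ),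
      Z - X * Xᵀ * Z = (1 - X * Xᵀ) * Z := by
    intro X Z
    rw [Matrix.sub_mul, Matrix.one_mul]
  -- step 1 : ‖(1-Pt)Y‖ = ‖(1-Pt)YYᵀ‖
  have s1 : frobNorm (Y - Xt * Xtᵀ * Y) = frobNorm ((1 - Xt * Xtᵀ) * (Y * Yᵀ)) := by
    rw [rw1, frobNorm, frobNorm, ← Matrix.mul_assoc,
      show (1 - Xt * Xtᵀ) * Y * Yᵀ = (1 - Xt * Xtᵀ) * (Y * Yᵀ) from Matrix.mul_assoc _ _ _,
      frobSq_mul_orth _ Y hY]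
  -- decomposition
  have hdec : (1 - Xt * Xtᵀ) * (Y * Yᵀ) = (1 - Xt * Xtᵀ) * (Yt * Ytᵀ) + (1 - Xt * Xtᵀ) * E := by
    rw [hEdef, Matrix.mul_sub]
    abel
  -- triangle
  have tri : frobNorm ((1 - Xt * Xtᵀ) * (Y * Yᵀ)) ≤
      frobNorm ((1 - Xt * Xtᵀ) * (Yt * Ytᵀ)) + frobNorm ((1 - Xt * Xtᵀ) * E) := by
    rw [hdec, frobNorm_eq_norm, frobNorm_eq_norm, frobNorm_eq_norm]
    exact norm_add_le _ _
  have hPtE : frobNorm ((1 - Xt * Xtᵀ) * E) ≤ ε :=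
    le_trans (frobNorm_le_of_frobSq (frobSq_proj_le Xt hXt E)) hE
  -- ‖(1-Pt)YtYtᵀ‖ = ‖(1-Pt)Yt‖
  have s2 : frobNorm ((1 - Xt * Xtᵀ) * (Yt * Ytᵀ)) = frobNorm ((1 - Xt * Xtᵀ) * Yt) := by
    rw [frobNorm, frobNorm, frobSq_mul_orth _ Yt hYt]
  -- approx step
  have s3 : frobNorm ((1 - Xt * Xtᵀ) * Yt) ≤
      Real.sqrt γ * frobNorm ((1 - Xopt * Xoptᵀ) * Yt) := by
    rw [frobNorm, frobNorm, ← Real.sqrt_mul (by linarith : (0:ℝ) ≤ γ)]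
    apply Real.sqrt_le_sqrt
    rw [← rw1, ← rw1]
    exact happrox
  -- back to Y for Xopt
  have s4 : frobNorm ((1 - Xopt * Xoptᵀ) * Yt) ≤
      frobNorm (Y - Xopt * Xoptᵀ * Y) + ε := by
    have e1 : frobNorm ((1 - Xopt * Xoptᵀ) * Yt) =
        frobNorm ((1 - Xopt * Xoptᵀ) * (Yt * Ytᵀ)) := by
      rw [frobNorm, frobNorm, frobSq_mul_orth _ Yt hYt]
    have hdec2 : (1 - Xopt * Xoptᵀ) * (Yt * Ytᵀ) =
        (1 - Xopt * Xoptᵀ) * (Y * Yᵀ) + (1 - Xopt * Xoptᵀ) * (-E) := by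
      rw [hEdef, Matrix.mul_neg, Matrix.mul_sub]
      abel
    have tri2 : frobNorm ((1 - Xopt * Xoptᵀ) * (Yt * Ytᵀ)) ≤
        frobNorm ((1 - Xopt * Xoptᵀ) * (Y * Yᵀ)) + frobNorm ((1 - Xopt * Xoptᵀ) * (-E)) := by
      rw [hdec2, frobNorm_eq_norm, frobNorm_eq_norm, frobNorm_eq_norm]
      exact norm_add_le _ _
    have hnegE : frobNorm (-E) = frobNorm E := by
      rw [frobNorm_eq_norm, frobNorm_eq_norm, norm_neg]
    have hPoE : frobNorm ((1 - Xopt * Xoptᵀ) * (-E)) ≤ ε := by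
      refine le_trans (frobNorm_le_of_frobSq (frobSq_proj_le Xopt hXopt (-E))) ?_
      rw [hnegE]; exact hE
    have e2 : frobNorm ((1 - Xopt * Xoptᵀ) * (Y * Yᵀ)) = frobNorm (Y - Xopt * Xoptᵀ * Y) := by
      rw [rw1, frobNorm, frobNorm, ← Matrix.mul_assoc,
        show (1 - Xopt * Xoptᵀ) * Y * Yᵀ = (1 - Xopt * Xoptᵀ) * (Y * Yᵀ) from
          Matrix.mul_assoc _ _ _, frobSq_mul_orth _ Y hY]
    calc frobNorm ((1 - Xopt * Xoptᵀ) * Yt)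
        = frobNorm ((1 - Xopt * Xoptᵀ) * (Yt * Ytᵀ)) := e1
      _ ≤ frobNorm ((1 - Xopt * Xoptᵀ) * (Y * Yᵀ)) + frobNorm ((1 - Xopt * Xoptᵀ) * (-E)) := tri2
      _ ≤ frobNorm (Y - Xopt * Xoptᵀ * Y) + ε := by rw [e2]; linarith
  -- combine
  have chain : frobNorm (Y - Xt * Xtᵀ * Y) ≤
      Real.sqrt γ * (frobNorm (Y - Xopt * Xoptᵀ * Y) + ε) + ε := by
    calc frobNorm (Y - Xt * Xtᵀ * Y)
        = frobNorm ((1 - Xt * Xtᵀ) * (Y * Yᵀ)) := s1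
      _ ≤ frobNorm ((1 - Xt * Xtᵀ) * (Yt * Ytᵀ)) + frobNorm ((1 - Xt * Xtᵀ) * E) := tri
      _ ≤ frobNorm ((1 - Xt * Xtᵀ) * Yt) + ε := by rw [s2]; linarith
      _ ≤ Real.sqrt γ * frobNorm ((1 - Xopt * Xoptᵀ) * Yt) + ε := by linarith
      _ ≤ Real.sqrt γ * (frobNorm (Y - Xopt * Xoptᵀ * Y) + ε) + ε := by
          have := mul_le_mul_of_nonneg_left s4 (le_trans zero_le_one hsγ)
          linarith
  have : Real.sqrt γ * ε + ε ≤ 2 * Real.sqrt γ * ε := by nlinarith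
  nlinarith [chain]
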